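/- Let Γ be a weighted congestion game fulfilling Conditions 1–2 and Γ̂ its Ψ̂-game. Then Γ possesses a d!-approximate pure Nash equilibrium; in particular, every pure Nash equilibrium of Γ̂ (which exists) is a d!-approximate pure Nash equilibrium of Γ. -/

import Mathlib

/-- `hpoly k l` is the complete homogeneous symmetric polynomial of degree `k`
evaluated at the entries of the list `l`, i.e. the sum of all monomials of
total degree `k` in the elements of `l`. -/
noncomputable def hpoly : ℕ → List ℝ → ℝ
  | 0, _ => 1
  | _ + 1, [] => 0
  | k + 1, a :: l => a * hpoly k (a :: l) + hpoly (k + 1) l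
termination_by k l => (k, l.length)

/-- The `k`-order `Ψ̂`-function of a multiset `M` of reals:
`Ψ̂_k(M) = k! ·` (sum of all monomials of total degree `k` in the elements of `M`).
In particular `Ψ̂_0(M) = 1` and `Ψ̂_k(∅) = 0` for `k ≥ 1`. -/
noncomputable def psiHat (k : ℕ) (M : Multiset ℝ) : ℝ :=
  (Nat.factorial k : ℝ) * hpoly k M.toList


lemma hpoly_zero (l : List ℝ) : hpoly 0 l = 1 := by rw [hpoly]
lemma hpoly_nil (k : ℕ) : hpoly (k+1) [] = 0 := by rw [hpoly]
lemma hpoly_cons (k : ℕ) (a : ℝ) (l : List ℝ) :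
    hpoly (k+1) (a::l) = a * hpoly k (a::l) + hpoly (k+1) l := by rw [hpoly]

lemma hpoly_one : ∀ l : List ℝ, hpoly 1 l = l.sum
  | [] => by simp [hpoly_nil]
  | a :: l => by rw [hpoly_cons, hpoly_zero, hpoly_one l]; simp

lemma hpoly_nonneg : ∀ (k : ℕ) (l : List ℝ), (∀ x ∈ l, 0 ≤ x) → 0 ≤ hpoly k l
  | 0, l, _ => by rw [hpoly_zero]; norm_num
  | k+1, [], _ => by rw [hpoly_nil]
  | k+1, a::l, h => by
      rw [hpoly_cons]
      have ha := h a (by simp)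
      have h1 := hpoly_nonneg k (a::l) h
      have h2 := hpoly_nonneg (k+1) l (fun x hx => h x (by simp [hx]))
      positivity
termination_by k l => (k, l.length)

lemma hpoly_claimC : ∀ (k : ℕ) (l : List ℝ), (∀ x ∈ l, 0 ≤ x) →
    l.sum * hpoly k l ≤ ((k:ℝ)+1) * hpoly (k+1) l
  | k, [], _ => by simp [hpoly_nil]
  | 0, a::l, h => by rw [hpoly_zero, hpoly_one]; norm_num
  | k+1, a::l, h => by
      have ha : (0:ℝ) ≤ a := h a (by simp)
      have h' : ∀ x ∈ l, (0:ℝ) ≤ x := fun x hx => h x (by simp [hx])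
      have IH1 := hpoly_claimC k (a::l) h
      have IH2 := hpoly_claimC (k+1) l h'
      have hn1 := hpoly_nonneg k (a::l) h
      have hn2 := hpoly_nonneg (k+1) l h'
      have mono : hpoly (k+1) l ≤ hpoly (k+1) (a::l) := by
        rw [hpoly_cons]; nlinarith
      rw [List.sum_cons] at IH1 ⊢
      rw [hpoly_cons (k+1) a l]
      rw [hpoly_cons k a l] at *
      push_cast at IH1 IH2 ⊢
      nlinarith [mul_le_mul_of_nonneg_left IH1 ha, mul_le_mul_of_nonneg_left mono ha, IH2]
termination_by k l => (k, l.length)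

lemma hpoly_le_pow : ∀ (k : ℕ) (l : List ℝ), (∀ x ∈ l, 0 ≤ x) → hpoly k l ≤ l.sum ^ k
  | 0, l, _ => by rw [hpoly_zero, pow_zero]
  | k+1, [], _ => by simp [hpoly_nil]
  | k+1, a::l, h => by
      have ha : (0:ℝ) ≤ a := h a (by simp)
      have h' : ∀ x ∈ l, (0:ℝ) ≤ x := fun x hx => h x (by simp [hx])
      have hs : (0:ℝ) ≤ l.sum := List.sum_nonneg h'
      have IH1 := hpoly_le_pow k (a::l) h
      have IH2 := hpoly_le_pow (k+1) l h'
      rw [List.sum_cons] at IH1 ⊢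
      rw [hpoly_cons]
      have hp : l.sum ^ (k+1) ≤ l.sum * (a + l.sum) ^ k := by
        rw [pow_succ']
        exact mul_le_mul_of_nonneg_left (pow_le_pow_left₀ hs (by linarith) k) hs
      have hmul : a * hpoly k (a::l) ≤ a * (a + l.sum) ^ k :=
        mul_le_mul_of_nonneg_left IH1 ha
      calc a * hpoly k (a::l) + hpoly (k+1) l
          ≤ a * (a + l.sum)^k + l.sum * (a + l.sum)^k := by linarith
        _ = (a + l.sum)^(k+1) := by ring
termination_by k l => (k, l.length)


lemma pow_le_factorial_hpoly (l : List ℝ) (h : ∀ x ∈ l, 0 ≤ x) :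
    ∀ k : ℕ, l.sum ^ k ≤ (Nat.factorial k : ℝ) * hpoly k l
  | 0 => by simp [hpoly_zero]
  | k+1 => by
      have hs : (0:ℝ) ≤ l.sum := List.sum_nonneg h
      have IH := pow_le_factorial_hpoly l h k
      have hC := hpoly_claimC k l h
      have hf : (0:ℝ) ≤ (Nat.factorial k : ℝ) := by positivity
      calc l.sum ^ (k+1) = l.sum * l.sum ^ k := by ring
        _ ≤ l.sum * ((Nat.factorial k : ℝ) * hpoly k l) := by
            exact mul_le_mul_of_nonneg_left IH hs
        _ = (Nat.factorial k : ℝ) * (l.sum * hpoly k l) := by ring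
        _ ≤ (Nat.factorial k : ℝ) * (((k:ℝ)+1) * hpoly (k+1) l) :=
            mul_le_mul_of_nonneg_left hC hf
        _ = (Nat.factorial (k+1) : ℝ) * hpoly (k+1) l := by
            rw [Nat.factorial_succ]; push_cast; ring

lemma hpoly_swap : ∀ (k : ℕ) (a b : ℝ) (l : List ℝ), hpoly k (a::b::l) = hpoly k (b::a::l)
  | 0, a, b, l => by rw [hpoly_zero, hpoly_zero]
  | 1, a, b, l => by simp only [hpoly_cons, hpoly_zero]; ring
  | (n+2), a, b, l => by
      have h0 := hpoly_swap n a b l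
      have h1 := hpoly_swap (n+1) a b l
      simp only [hpoly_cons] at h1 ⊢
      linear_combination (a+b) * h1 - a*b*h0

lemma hpoly_perm {l l' : List ℝ} (h : l.Perm l') : ∀ k, hpoly k l = hpoly k l' := by
  induction h with
  | nil => intro k; rfl
  | cons a _ ih =>
      intro k
      induction k with
      | zero => rw [hpoly_zero, hpoly_zero]
      | succ k ihk => rw [hpoly_cons, hpoly_cons, ihk, ih (k+1)]
  | swap a b l => intro k; exact hpoly_swap k b a l
  | trans _ _ ih1 ih2 => intro k; rw [ih1 k, ih2 k]



lemma toList_cons_perm (a : ℝ) (M : Multiset ℝ) :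
    (a ::ₘ M).toList.Perm (a :: M.toList) := by
  rw [← Multiset.coe_eq_coe, Multiset.coe_toList, ← Multiset.cons_coe, Multiset.coe_toList]

lemma psiHat_cons (k : ℕ) (a : ℝ) (M : Multiset ℝ) :
    psiHat k (a ::ₘ M) = (Nat.factorial k : ℝ) * hpoly k (a :: M.toList) := by
  unfold psiHat
  rw [hpoly_perm (toList_cons_perm a M) k]

lemma psiHat_succ_cons (k : ℕ) (a : ℝ) (M : Multiset ℝ) :
    psiHat (k+1) (a ::ₘ M) = ((k:ℝ)+1) * a * psiHat k (a ::ₘ M) + psiHat (k+1) M := by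
  rw [psiHat_cons (k+1), hpoly_cons, psiHat_cons k]
  unfold psiHat
  rw [Nat.factorial_succ]
  push_cast
  ring

lemma pow_le_psiHat (k : ℕ) (M : Multiset ℝ) (h : ∀ x ∈ M, 0 ≤ x) :
    M.sum ^ k ≤ psiHat k M := by
  have h' : ∀ x ∈ M.toList, 0 ≤ x := fun x hx => h x (by rwa [← Multiset.mem_toList])
  have := pow_le_factorial_hpoly M.toList h' k
  rwa [Multiset.sum_toList] at this

lemma psiHat_le_pow (k : ℕ) (M : Multiset ℝ) (h : ∀ x ∈ M, 0 ≤ x) :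
    psiHat k M ≤ (Nat.factorial k : ℝ) * M.sum ^ k := by
  have h' : ∀ x ∈ M.toList, 0 ≤ x := fun x hx => h x (by rwa [← Multiset.mem_toList])
  have := hpoly_le_pow k M.toList h'
  rw [Multiset.sum_toList] at this
  have hf : (0:ℝ) ≤ (Nat.factorial k : ℝ) := by positivity
  unfold psiHat
  exact mul_le_mul_of_nonneg_left this hf


/-- A weighted congestion game with `N` players, `E` resources, polynomial latency
functions of degree at most `d` (Condition 2, with coefficient-ratio bound `A`),
and players' weights in `[1, W]` (Condition 1). -/
structure WCGame (N E d : ℕ) (W A : ℝ) where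
  /-- the strategy set of each player: a set of nonempty subsets of resources -/
  strat : Fin N → Set (Finset (Fin E))
  strat_nonempty : ∀ u, (strat u).Nonempty
  strat_valid : ∀ u, ∀ s ∈ strat u, s.Nonempty
  /-- the weight of each player -/
  w : Fin N → ℝ
  /-- `a e k` is the coefficient of `x^k` in the latency function of resource `e` -/
  a : Fin E → ℕ → ℝ
  hd : 1 ≤ d
  hW : 1 ≤ W
  hw_lower : ∀ u, 1 ≤ w u
  hw_upper : ∀ u, w u ≤ W
  ha_nonneg : ∀ e k, 0 ≤ a e k
  ha_pos : ∀ e, 0 < ∑ k ∈ Finset.range (d + 1), a e k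
  hA_pos : 0 < A
  hA_bound : ∀ e e' k k', k ≤ d → k' ≤ d → 0 < a e k → a e' k' ≤ A * a e k

namespace WCGame

/-- A (pure strategy) profile: a choice of a set of resources for every player. -/
abbrev Profile (N E : ℕ) := Fin N → Finset (Fin E)

variable {N E d : ℕ} {W A : ℝ}

/-- A profile is feasible if every player uses one of her strategies. -/
def IsProfile (G : WCGame N E d W A) (S : Profile N E) : Prop :=
  ∀ u, S u ∈ G.strat u

/-- `U_e(S)`: the multiset of weights of the players using resource `e` in profile `S`. -/
noncomputable def load (G : WCGame N E d W A) (S : Profile N E) (e : Fin E) : Multiset ℝ :=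
  (Finset.univ.filter (fun u => e ∈ S u)).val.map G.w

/-- The cost `c_u(S) = w_u · ∑_{e ∈ s_u} ∑_{k=0}^d a_{e,k} · L(U_e(S))^k` of player `u`
in the original game `Γ`. -/
noncomputable def cost (G : WCGame N E d W A) (S : Profile N E) (u : Fin N) : ℝ :=
  G.w u * ∑ e ∈ S u, ∑ k ∈ Finset.range (d + 1), G.a e k * (G.load S e).sum ^ k

/-- The cost `ĉ_u(S) = w_u · ∑_{e ∈ s_u} ∑_{k=0}^d a_{e,k} · Ψ̂_k(U_e(S))` of player `u`
in the `Ψ̂`-game `Γ̂`. -/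
noncomputable def hcost (G : WCGame N E d W A) (S : Profile N E) (u : Fin N) : ℝ :=
  G.w u * ∑ e ∈ S u, ∑ k ∈ Finset.range (d + 1), G.a e k * psiHat k (G.load S e)

/-- The potential function `Φ̂(S) = ∑_e ∑_{k=0}^d (a_{e,k}/(k+1)) · Ψ̂_{k+1}(U_e(S))`
of the `Ψ̂`-game. -/
noncomputable def potHat (G : WCGame N E d W A) (S : Profile N E) : ℝ :=
  ∑ e : Fin E, ∑ k ∈ Finset.range (d + 1),
    G.a e k / ((k : ℝ) + 1) * psiHat (k + 1) (G.load S e)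

/-- The approximate potential function `Φ(S) = ∑_e Ψ_e(L(U_e(S)))` with
`Ψ_e(x) = a_{e,0}·x + ∑_{k=1}^d a_{e,k}·(x^{k+1}/(k+1) + x^k/2)`. -/
noncomputable def pot (G : WCGame N E d W A) (S : Profile N E) : ℝ :=
  ∑ e : Fin E,
    (G.a e 0 * (G.load S e).sum +
      ∑ k ∈ Finset.Icc 1 d,
        G.a e k * ((G.load S e).sum ^ (k + 1) / ((k : ℝ) + 1) + (G.load S e).sum ^ k / 2))

/-- `S` is a `ρ`-approximate pure Nash equilibrium w.r.t. the player costs `costFn`: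
no player can decrease her cost by more than a factor `ρ` by a unilateral deviation. -/
def IsApproxPNE (G : WCGame N E d W A) (costFn : Profile N E → Fin N → ℝ) (ρ : ℝ)
    (S : Profile N E) : Prop :=
  ∀ u, ∀ s' ∈ G.strat u, costFn S u ≤ ρ * costFn (Function.update S u s') u

/-- `sstar u` is a best response of player `u` to `S₋ᵤ` w.r.t. the costs `costFn`. -/
def IsBestResponses (G : WCGame N E d W A) (costFn : Profile N E → Fin N → ℝ)
    (S : Profile N E) (sstar : Fin N → Finset (Fin E)) : Prop :=
  ∀ u, sstar u ∈ G.strat u ∧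
    ∀ s ∈ G.strat u, costFn (Function.update S u (sstar u)) u ≤ costFn (Function.update S u s) u

/-- One step of Algorithm 1 (the `1/(1-ε)` best response dynamic on the `Ψ̂`-game),
moving from profile `S` to profile `S'` by letting the chosen player `ut` (a player with a
`1/(1-ε)`-move of maximum cost reduction) switch to her best response `sstar ut`. -/
def AlgOneStep (G : WCGame N E d W A) (ε : ℝ) (S S' : Profile N E) (ut : Fin N)
    (sstar : Fin N → Finset (Fin E)) : Prop :=
  G.IsBestResponses G.hcost S sstar ∧
  G.hcost S ut > (1 / (1 - ε)) * G.hcost (Function.update S ut (sstar ut)) ut ∧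
  (∀ u, G.hcost S u > (1 / (1 - ε)) * G.hcost (Function.update S u (sstar u)) u →
    G.hcost S ut - G.hcost (Function.update S ut (sstar ut)) ut ≥
      G.hcost S u - G.hcost (Function.update S u (sstar u)) u) ∧
  S' = Function.update S ut (sstar ut)

/-- One step of Algorithm 2 (the refined `ρ/(1-ε)` best response dynamic on `Γ`),
moving from profile `S` to profile `S'` by letting the chosen player `ut` (a player
maximizing `c_u(S) - ρ·c_u(s_u^*, S₋ᵤ)` among players with `ρ/(1-ε)`-moves) switch to
her best response `sstar ut`. -/
def AlgTwoStep (G : WCGame N E d W A) (ρ ε : ℝ) (S S' : Profile N E) (ut : Fin N)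
    (sstar : Fin N → Finset (Fin E)) : Prop :=
  G.IsBestResponses G.cost S sstar ∧
  G.cost S ut > (ρ / (1 - ε)) * G.cost (Function.update S ut (sstar ut)) ut ∧
  (∀ u, G.cost S u > (ρ / (1 - ε)) * G.cost (Function.update S u (sstar u)) u →
    G.cost S ut - ρ * G.cost (Function.update S ut (sstar ut)) ut ≥
      G.cost S u - ρ * G.cost (Function.update S u (sstar u)) u) ∧
  S' = Function.update S ut (sstar ut)

/-- `c_max`: the maximum cost of a player over all (feasible) profiles in `Γ`. -/
noncomputable def cMax (G : WCGame N E d W A) : ℝ :=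
  sSup {x | ∃ S u, G.IsProfile S ∧ x = G.cost S u}

/-- `ĉ_max`: the maximum cost of a player over all (feasible) profiles in `Γ̂`. -/
noncomputable def hcMax (G : WCGame N E d W A) : ℝ :=
  sSup {x | ∃ S u, G.IsProfile S ∧ x = G.hcost S u}

/-- `Φ̂_min`: the minimum of the potential `Φ̂` over all (feasible) profiles. -/
noncomputable def potHatMin (G : WCGame N E d W A) : ℝ :=
  sInf {x | ∃ S, G.IsProfile S ∧ x = G.potHat S}

/-- `a_min⁺`: the minimum positive coefficient of the latency functions. -/
noncomputable def aMinPos (G : WCGame N E d W A) : ℝ :=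
  sInf {x | 0 < x ∧ ∃ e k, k ≤ d ∧ x = G.a e k}

end WCGame

namespace WCGame

variable {N E d : ℕ} {W A : ℝ}

lemma load_nonneg (G : WCGame N E d W A) (S : Profile N E) (e : Fin E) :
    ∀ x ∈ G.load S e, (0:ℝ) ≤ x := by
  intro x hx
  unfold load at hx
  obtain ⟨v, -, rfl⟩ := Multiset.mem_map.1 hx
  linarith [G.hw_lower v]

/-- `ĉ_e`-type auxiliary: the `Ψ̂`-latency of resource `e` at load `M`. -/
noncomputable def gge (G : WCGame N E d W A) (e : Fin E) (M : Multiset ℝ) : ℝ :=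
  ∑ k ∈ Finset.range (d+1), G.a e k * psiHat k M

/-- Potential contribution of resource `e` at load `M`. -/
noncomputable def ffe (G : WCGame N E d W A) (e : Fin E) (M : Multiset ℝ) : ℝ :=
  ∑ k ∈ Finset.range (d+1), G.a e k / ((k:ℝ)+1) * psiHat (k+1) M

lemma ffe_cons (G : WCGame N E d W A) (e : Fin E) (x : ℝ) (M : Multiset ℝ) :
    G.ffe e (x ::ₘ M) - G.ffe e M = x * G.gge e (x ::ₘ M) := by
  unfold ffe gge
  rw [← Finset.sum_sub_distrib, Finset.mul_sum]
  refine Finset.sum_congr rfl fun k _ => ?_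
  have hk : ((k:ℝ)+1) ≠ 0 := by positivity
  rw [psiHat_succ_cons]
  field_simp
  ring

lemma load_decomp (G : WCGame N E d W A) (S : Profile N E) (u : Fin N) (e : Fin E) :
    G.load S e = (if e ∈ S u then ({G.w u} : Multiset ℝ) else 0)
      + Multiset.map G.w (Multiset.filter (fun v => e ∈ S v) (Finset.univ.val.erase u)) := by
  classical
  unfold load
  rw [Finset.filter_val]
  have hu : u ∈ (Finset.univ : Finset (Fin N)).val := Finset.mem_val.mpr (Finset.mem_univ u)
  conv_lhs => rw [← Multiset.cons_erase hu, Multiset.filter_cons, Multiset.map_add]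
  congr 1
  split_ifs <;> simp

lemma filter_update_erase [DecidableEq (Fin N)] (S : Profile N E) (u : Fin N)
    (s' : Finset (Fin E)) (e : Fin E) :
    Multiset.filter (fun v => e ∈ Function.update S u s' v) (Finset.univ.val.erase u)
      = Multiset.filter (fun v => e ∈ S v) (Finset.univ.val.erase u) := by
  apply Multiset.filter_congr
  intro v hv
  have hne : v ≠ u := ((Finset.univ.nodup.mem_erase_iff).1 hv).1
  rw [Function.update_of_ne hne]

lemma potHat_diff (G : WCGame N E d W A) (S : Profile N E) (u : Fin N) (s' : Finset (Fin E)) :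
    G.potHat (Function.update S u s') - G.potHat S
      = G.hcost (Function.update S u s') u - G.hcost S u := by
  classical
  have hh : ∀ T : Profile N E, G.hcost T u
      = ∑ e : Fin E, (if e ∈ T u then G.w u * G.gge e (G.load T e) else 0) := by
    intro T
    unfold hcost gge
    rw [Finset.mul_sum, Finset.sum_ite_mem, Finset.univ_inter]
  have hpot : ∀ T : Profile N E, G.potHat T = ∑ e : Fin E, G.ffe e (G.load T e) :=
    fun T => rfl
  rw [hpot, hpot, hh, hh, ← Finset.sum_sub_distrib, ← Finset.sum_sub_distrib]
  refine Finset.sum_congr rfl fun e _ => ?_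
  set B := Multiset.map G.w (Multiset.filter (fun v => e ∈ S v) (Finset.univ.val.erase u))
    with hBdef
  have hb : G.load S e = (if e ∈ S u then ({G.w u} : Multiset ℝ) else 0) + B :=
    G.load_decomp S u e
  have hb' : G.load (Function.update S u s') e
      = (if e ∈ s' then ({G.w u} : Multiset ℝ) else 0) + B := by
    rw [G.load_decomp (Function.update S u s') u e, filter_update_erase S u s' e,
      Function.update_self]
  rw [hb, hb', Function.update_self]
  have hcons := G.ffe_cons e (G.w u) B
  by_cases h1 : e ∈ s' <;> by_cases h2 : e ∈ S u <;>
    simp only [h1, h2, if_true, if_false, Multiset.singleton_add,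
      zero_add] <;> [skip; skip; skip; skip]
  · ring
  · linarith
  · linarith
  · ring

lemma cost_le_hcost (G : WCGame N E d W A) (S : Profile N E) (u : Fin N) :
    G.cost S u ≤ G.hcost S u := by
  unfold cost hcost
  have hw : (0:ℝ) ≤ G.w u := le_trans zero_le_one (G.hw_lower u)
  refine mul_le_mul_of_nonneg_left ?_ hw
  refine Finset.sum_le_sum fun e _ => ?_
  refine Finset.sum_le_sum fun k _ => ?_
  exact mul_le_mul_of_nonneg_left (pow_le_psiHat k _ (G.load_nonneg S e)) (G.ha_nonneg e k)

lemma hcost_le_cost (G : WCGame N E d W A) (S : Profile N E) (u : Fin N) :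
    G.hcost S u ≤ (Nat.factorial d : ℝ) * G.cost S u := by
  unfold cost hcost
  have hw : (0:ℝ) ≤ G.w u := le_trans zero_le_one (G.hw_lower u)
  have key : ∀ e ∈ S u, ∑ k ∈ Finset.range (d+1), G.a e k * psiHat k (G.load S e)
      ≤ ∑ k ∈ Finset.range (d+1),
          (Nat.factorial d : ℝ) * (G.a e k * (G.load S e).sum ^ k) := by
    intro e _
    refine Finset.sum_le_sum fun k hk => ?_
    have hk' : k ≤ d := by
      have := Finset.mem_range.1 hk; omega
    have h1 : psiHat k (G.load S e) ≤ (Nat.factorial k : ℝ) * (G.load S e).sum ^ k :=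
      psiHat_le_pow k _ (G.load_nonneg S e)
    have h2 : (Nat.factorial k : ℝ) ≤ (Nat.factorial d : ℝ) := by
      exact_mod_cast Nat.factorial_le hk'
    have hsum : (0:ℝ) ≤ (G.load S e).sum :=
      Multiset.sum_nonneg (G.load_nonneg S e)
    have hpow : (0:ℝ) ≤ (G.load S e).sum ^ k := pow_nonneg hsum k
    nlinarith [mul_le_mul_of_nonneg_left h1 (G.ha_nonneg e k),
      mul_nonneg (G.ha_nonneg e k) hpow]
  calc G.w u * ∑ e ∈ S u, ∑ k ∈ Finset.range (d+1), G.a e k * psiHat k (G.load S e)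
      ≤ G.w u * ∑ e ∈ S u, ∑ k ∈ Finset.range (d+1),
          (Nat.factorial d : ℝ) * (G.a e k * (G.load S e).sum ^ k) :=
        mul_le_mul_of_nonneg_left (Finset.sum_le_sum key) hw
    _ = (Nat.factorial d : ℝ) *
          (G.w u * ∑ e ∈ S u, ∑ k ∈ Finset.range (d+1),
            G.a e k * (G.load S e).sum ^ k) := by
        simp only [← Finset.mul_sum]
        ring

end WCGame

open WCGame in
/-- Theorem 1 (second part): `Γ` possesses a `d!`-approximate pure Nash equilibrium;
in particular, a pure Nash equilibrium of the `Ψ̂`-game `Γ̂` exists, and every pure Nash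
equilibrium of `Γ̂` is a `d!`-approximate pure Nash equilibrium of `Γ`. -/
theorem exists_factorial_approxPNE {N E d : ℕ} {W A : ℝ} (G : WCGame N E d W A) :
    (∃ S : Profile N E, G.IsProfile S ∧ G.IsApproxPNE G.hcost 1 S) ∧
      (∀ S : Profile N E, G.IsProfile S → G.IsApproxPNE G.hcost 1 S →
        G.IsApproxPNE G.cost (Nat.factorial d : ℝ) S) := by
  classical
  constructor
  · obtain ⟨S₀, hS₀⟩ : ∃ S : Profile N E, G.IsProfile S := by
      choose f hf using G.strat_nonempty
      exact ⟨f, hf⟩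
    obtain ⟨S, hSmem, hmin⟩ :=
      (Finset.univ.filter (fun S : Profile N E => G.IsProfile S)).exists_min_image
        G.potHat ⟨S₀, by simp [hS₀]⟩
    have hSP : G.IsProfile S := by simpa using hSmem
    refine ⟨S, hSP, ?_⟩
    intro u s' hs'
    have hfeas : G.IsProfile (Function.update S u s') := by
      intro v
      rcases eq_or_ne v u with rfl | hne
      · simpa using hs'
      · rw [Function.update_of_ne hne]; exact hSP v
    have hle : G.potHat S ≤ G.potHat (Function.update S u s') :=
      hmin _ (by simp [hfeas])
    have hdiff := G.potHat_diff S u s'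
    rw [one_mul]
    linarith
  · intro S hSP hPNE u s' hs'
    have h1 : G.cost S u ≤ G.hcost S u := G.cost_le_hcost S u
    have h2 := hPNE u s' hs'
    rw [one_mul] at h2
    have h3 : G.hcost (Function.update S u s') u
        ≤ (Nat.factorial d : ℝ) * G.cost (Function.update S u s') u :=
      G.hcost_le_cost _ u
    linarith
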